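/- Let β ≥ 1 be an integer and let u, v be real numbers with v ≠ 0. Then u · v^{2β} · D^{(β−1)}(0) = Σ_{k=0}^{β−1} [(β−1+k)!/(k!(β−1−k)!)] (uv)^{β−k}, where D^{(β−1)}(0) denotes the (β−1)-st derivative at λ = 0 of the function λ ↦ e^{uλ}/(v−λ)^{β}. Equivalently, this quantity equals 2^{β} Q_{β,0}(uv/2), where Q_{β,0}(x) = Σ_{k=0}^{β−1} [(β+k−1)!/(k!(β−k−1)!)] 2^{−k} x^{β−k}. -/

import Mathlib

open Finset

/-- The Carlitz polynomial `Q_{β,0}(x) = Σ_{k=0}^{β-1} (β+k-1)!/(k!(β-k-1)!) 2^{-k} x^{β-k}`,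
as a function on `ℝ`. -/
noncomputable def carlitzQ (β : ℕ) (x : ℝ) : ℝ :=
  ∑ k ∈ Finset.range β,
    (Nat.factorial (β + k - 1) : ℝ) / (Nat.factorial k * Nat.factorial (β - k - 1)) *
      (1 / 2) ^ k * x ^ (β - k)

/-- Rising-factorial-like coefficient `β(β+1)⋯(β+j-1)` as a real number. -/
noncomputable def af (β : ℕ) : ℕ → ℝ
  | 0 => 1
  | j + 1 => (β + j : ℝ) * af β j

lemma af_fact (β : ℕ) (hβ : 1 ≤ β) : ∀ j : ℕ,
    ((β - 1).factorial : ℝ) * af β j = ((β - 1 + j).factorial : ℝ) := by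
  intro j
  induction j with
  | zero => simp [af]
  | succ j ih =>
    have h1 : β - 1 + (j + 1) = (β - 1 + j) + 1 := by omega
    have h2 : ((β - 1 + j : ℕ) : ℝ) + 1 = (β : ℝ) + j := by
      have h : (β - 1 + j : ℕ) + 1 = β + j := by omega
      exact_mod_cast congrArg (Nat.cast : ℕ → ℝ) h
    have h3 : ((β - 1 + j + 1 : ℕ) : ℝ) = (β : ℝ) + j := by
      have h : (β - 1 + j + 1 : ℕ) = β + j := by omega
      rw [h]; push_cast; ring
    rw [h1, af, Nat.factorial_succ, Nat.cast_mul, h3]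
    linear_combination ((β : ℝ) + j) * ih

lemma coeff_eq (β : ℕ) (hβ : 1 ≤ β) (j : ℕ) (hj : j ≤ β - 1) :
    ((β - 1).choose j : ℝ) * af β j =
      (Nat.factorial (β - 1 + j) : ℝ) / (Nat.factorial j * Nat.factorial (β - 1 - j)) := by
  have h1 := af_fact β hβ j
  have h2 : ((β - 1).choose j * j.factorial * (β - 1 - j).factorial : ℕ) = (β - 1).factorial :=
    Nat.choose_mul_factorial_mul_factorial hj
  have h2c : (((β - 1).choose j : ℝ)) * (j.factorial : ℝ) * ((β - 1 - j).factorial : ℝ)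
      = ((β - 1).factorial : ℝ) := by exact_mod_cast congrArg (Nat.cast : ℕ → ℝ) h2
  rw [eq_div_iff (by positivity)]
  linear_combination af β j * h2c + h1

lemma hasDerivAt_invpow (m : ℕ) {v x : ℝ} (h : v - x ≠ 0) :
    HasDerivAt (fun y : ℝ => ((v - y)⁻¹) ^ m) ((m : ℝ) * ((v - x)⁻¹) ^ (m + 1)) x := by
  have h1 : HasDerivAt (fun y : ℝ => v - y) (-1) x := by
    simpa using (hasDerivAt_const x v).fun_sub (hasDerivAt_id x)
  have h2 := (hasDerivAt_zpow (-(m : ℤ)) (v - x) (Or.inl h)).comp x h1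
  have hfun : (fun y : ℝ => ((v - y)⁻¹) ^ m) = (fun y : ℝ => (v - y) ^ (-(m : ℤ))) := by
    funext y
    rw [zpow_neg, zpow_natCast, inv_pow]
  rw [hfun]
  refine h2.congr_deriv ?_
  have h3 : (v - x) ^ (-(m : ℤ) - 1) = ((v - x)⁻¹) ^ (m + 1) := by
    rw [← zpow_natCast ((v - x)⁻¹), inv_zpow, ← zpow_neg]
    congr 1
    push_cast
    ring
  rw [h3]
  push_cast
  ring

lemma pascal_id (β n : ℕ) (u t : ℝ) :
    (∑ j ∈ Finset.range (n + 1), (n.choose j : ℝ) * u ^ (n + 1 - j) * af β j * t ^ (β + j))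
      + (∑ j ∈ Finset.range (n + 1), (n.choose j : ℝ) * u ^ (n - j) * af β (j + 1) * t ^ (β + j + 1))
    = ∑ j ∈ Finset.range (n + 1 + 1), ((n + 1).choose j : ℝ) * u ^ (n + 1 - j) * af β j * t ^ (β + j) := by
  rw [Finset.sum_range_succ' (fun j => ((n + 1).choose j : ℝ) * u ^ (n + 1 - j) * af β j * t ^ (β + j)) (n + 1),
      Finset.sum_range_succ' (fun j => (n.choose j : ℝ) * u ^ (n + 1 - j) * af β j * t ^ (β + j)) n]
  have h1 : ∀ i, ((n + 1).choose (i + 1) : ℝ) = (n.choose i : ℝ) + (n.choose (i + 1) : ℝ) := by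
    intro i
    rw [Nat.choose_succ_succ]
    push_cast
    ring
  have h2 : ∀ i, n + 1 - (i + 1) = n - i := fun i => by omega
  have hsplit : ∑ i ∈ Finset.range (n + 1),
        ((n + 1).choose (i + 1) : ℝ) * u ^ (n + 1 - (i + 1)) * af β (i + 1) * t ^ (β + (i + 1))
      = (∑ i ∈ Finset.range (n + 1), (n.choose i : ℝ) * u ^ (n - i) * af β (i + 1) * t ^ (β + i + 1))
        + ∑ i ∈ Finset.range (n + 1), (n.choose (i + 1) : ℝ) * u ^ (n - i) * af β (i + 1) * t ^ (β + i + 1) := by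
    rw [← Finset.sum_add_distrib]
    refine Finset.sum_congr rfl fun i hi => ?_
    rw [h1, h2]
    have h : β + (i + 1) = β + i + 1 := by omega
    rw [h]
    ring
  have htail : ∑ i ∈ Finset.range (n + 1), (n.choose (i + 1) : ℝ) * u ^ (n - i) * af β (i + 1) * t ^ (β + i + 1)
      = ∑ i ∈ Finset.range n, (n.choose (i + 1) : ℝ) * u ^ (n - i) * af β (i + 1) * t ^ (β + i + 1) := by
    rw [Finset.sum_range_succ]
    simp [Nat.choose_succ_self]
  have hleft : ∑ i ∈ Finset.range n, (n.choose (i + 1) : ℝ) * u ^ (n + 1 - (i + 1)) * af β (i + 1) * t ^ (β + (i + 1))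
      = ∑ i ∈ Finset.range n, (n.choose (i + 1) : ℝ) * u ^ (n - i) * af β (i + 1) * t ^ (β + i + 1) := by
    refine Finset.sum_congr rfl fun i hi => ?_
    rw [h2]
    have h : β + (i + 1) = β + i + 1 := by omega
    rw [h]
  simp only [hsplit, htail, hleft]
  simp [Nat.choose_zero_right]
  ring

lemma key (β : ℕ) (u v : ℝ) : ∀ (n : ℕ) (x : ℝ), x ≠ v →
    iteratedDeriv n (fun l : ℝ => Real.exp (u * l) / (v - l) ^ β) x =
      Real.exp (u * x) * ∑ j ∈ Finset.range (n + 1),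
        (n.choose j : ℝ) * u ^ (n - j) * af β j * ((v - x)⁻¹) ^ (β + j) := by
  intro n
  induction n with
  | zero =>
    intro x hx
    simp [af, div_eq_mul_inv, inv_pow]
  | succ n ih =>
    intro x hx
    have hvx : v - x ≠ 0 := sub_ne_zero.mpr (Ne.symm hx)
    rw [iteratedDeriv_succ]
    have hmem : {v}ᶜ ∈ nhds x := isOpen_compl_singleton.mem_nhds hx
    have heq : iteratedDeriv n (fun l : ℝ => Real.exp (u * l) / (v - l) ^ β) =ᶠ[nhds x]
        (fun y => Real.exp (u * y) * ∑ j ∈ Finset.range (n + 1),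
          (n.choose j : ℝ) * u ^ (n - j) * af β j * ((v - y)⁻¹) ^ (β + j)) :=
      Filter.eventuallyEq_of_mem hmem (fun y hy => ih y hy)
    rw [heq.deriv_eq]
    have hexp : HasDerivAt (fun y : ℝ => Real.exp (u * y)) (u * Real.exp (u * x)) x := by
      simpa [mul_comm] using ((hasDerivAt_id x).const_mul u).exp
    have hsum : HasDerivAt (fun y : ℝ => ∑ j ∈ Finset.range (n + 1),
          (n.choose j : ℝ) * u ^ (n - j) * af β j * ((v - y)⁻¹) ^ (β + j))
        (∑ j ∈ Finset.range (n + 1),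
          (n.choose j : ℝ) * u ^ (n - j) * af β j *
            (((β + j : ℕ) : ℝ) * ((v - x)⁻¹) ^ (β + j + 1))) x := by
      refine HasDerivAt.fun_sum fun j hj => ?_
      exact (hasDerivAt_invpow (β + j) hvx).const_mul _
    rw [(hexp.fun_mul hsum).deriv]
    set t := (v - x)⁻¹ with ht
    have hS : u * Real.exp (u * x) *
          (∑ j ∈ Finset.range (n + 1), (n.choose j : ℝ) * u ^ (n - j) * af β j * t ^ (β + j))
        = Real.exp (u * x) *
          (∑ j ∈ Finset.range (n + 1), (n.choose j : ℝ) * u ^ (n + 1 - j) * af β j * t ^ (β + j)) := by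
      rw [Finset.mul_sum, Finset.mul_sum]
      refine Finset.sum_congr rfl fun j hj => ?_
      have hj' : j ≤ n := Nat.lt_succ_iff.mp (Finset.mem_range.mp hj)
      have hpow : u ^ (n + 1 - j) = u * u ^ (n - j) := by
        rw [← pow_succ']
        congr 1
        omega
      rw [hpow]; ring
    have hS' : (∑ j ∈ Finset.range (n + 1), (n.choose j : ℝ) * u ^ (n - j) * af β j *
          (((β + j : ℕ) : ℝ) * t ^ (β + j + 1)))
        = ∑ j ∈ Finset.range (n + 1), (n.choose j : ℝ) * u ^ (n - j) * af β (j + 1) * t ^ (β + j + 1) := by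
      refine Finset.sum_congr rfl fun j hj => ?_
      rw [af]
      push_cast
      ring
    rw [hS, hS', ← mul_add, pascal_id β n u t]

theorem statement3 (β : ℕ) (hβ : 1 ≤ β) (u v : ℝ) (hv : v ≠ 0) :
    u * v ^ (2 * β) *
        iteratedDeriv (β - 1) (fun l : ℝ => Real.exp (u * l) / (v - l) ^ β) 0 =
      ∑ k ∈ Finset.range β,
        (Nat.factorial (β - 1 + k) : ℝ) / (Nat.factorial k * Nat.factorial (β - 1 - k)) *
          (u * v) ^ (β - k) ∧
    u * v ^ (2 * β) *
        iteratedDeriv (β - 1) (fun l : ℝ => Real.exp (u * l) / (v - l) ^ β) 0 =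
      2 ^ β * carlitzQ β (u * v / 2) := by
  have h0v : (0 : ℝ) ≠ v := Ne.symm hv
  have hsucc : β - 1 + 1 = β := by omega
  have hder := key β u v (β - 1) 0 h0v
  rw [hsucc] at hder
  simp only [sub_zero, mul_zero, Real.exp_zero, one_mul] at hder
  have hfirst : u * v ^ (2 * β) *
      iteratedDeriv (β - 1) (fun l : ℝ => Real.exp (u * l) / (v - l) ^ β) 0 =
      ∑ k ∈ Finset.range β,
        (Nat.factorial (β - 1 + k) : ℝ) / (Nat.factorial k * Nat.factorial (β - 1 - k)) *
          (u * v) ^ (β - k) := by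
    rw [hder, Finset.mul_sum]
    refine Finset.sum_congr rfl fun j hj => ?_
    have hj' : j ≤ β - 1 := by
      have := Finset.mem_range.mp hj
      omega
    have hu : u * u ^ (β - 1 - j) = u ^ (β - j) := by
      rw [← pow_succ']
      congr 1
      omega
    have hvp : v ^ (2 * β) * (v⁻¹) ^ (β + j) = v ^ (β - j) := by
      have hsplitv : v ^ (2 * β) = v ^ (β - j) * v ^ (β + j) := by
        rw [← pow_add]
        congr 1
        omega
      rw [hsplitv, inv_pow, mul_assoc, mul_inv_cancel₀ (pow_ne_zero _ hv), mul_one]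
    rw [← coeff_eq β hβ j hj', mul_pow, ← hu, ← hvp]
    ring
  have hcar : 2 ^ β * carlitzQ β (u * v / 2) =
      ∑ k ∈ Finset.range β,
        (Nat.factorial (β - 1 + k) : ℝ) / (Nat.factorial k * Nat.factorial (β - 1 - k)) *
          (u * v) ^ (β - k) := by
    unfold carlitzQ
    rw [Finset.mul_sum]
    refine Finset.sum_congr rfl fun k hk => ?_
    have hk' : k < β := Finset.mem_range.mp hk
    have hi1 : β + k - 1 = β - 1 + k := by omega
    have hi2 : β - k - 1 = β - 1 - k := by omega
    have h2p : (2 : ℝ) ^ β = 2 ^ k * 2 ^ (β - k) := by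
      rw [← pow_add]
      congr 1
      omega
    rw [hi1, hi2, div_pow, h2p]
    have h2k : (2 : ℝ) ^ k ≠ 0 := by positivity
    have h2bk : (2 : ℝ) ^ (β - k) ≠ 0 := by positivity
    field_simp
    rw [mul_assoc, one_pow, one_mul, div_pow]
    field_simp
  exact ⟨hfirst, hfirst.trans hcar.symm⟩
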